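/- Let K ⊂ ℝ^d be compact, f₁,…,f_m : K → ℝ^n Lebesgue integrable, α ∈ ℝ^n, and suppose the set 𝒜_α = {θ : K → Δ_m measurable | Σᵢ ∫_K θᵢ(x) fᵢ(x) dx = α} is nonempty, where Δ_m is the standard simplex in ℝ^m. Then for every continuous v : K → ℝ^m, the problem of minimizing ∫_K θ(x)·v(x) dx over θ ∈ 𝒜_α admits at least one solution. -/

import Mathlib

open MeasureTheory Filter Topology ENNReal

variable {X : Type*} [MeasurableSpace X]

lemma ulim_exists (𝒰 : Ultrafilter ℕ) {u : ℕ → ℝ} {a b : ℝ} (h : ∀ k, u k ∈ Set.Icc a b) :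
    ∃ l ∈ Set.Icc a b, Tendsto u 𝒰 (𝓝 l) := by
  obtain ⟨l, hl, hl2⟩ := isCompact_Icc.ultrafilter_le_nhds (𝒰.map u)
    (by rw [le_principal_iff, Ultrafilter.mem_coe, Ultrafilter.mem_map]
        exact Filter.univ_mem' h)
  exact ⟨l, hl, by rwa [Tendsto, ← Ultrafilter.coe_map]⟩

lemma key (μ : Measure X) [IsFiniteMeasure μ] (m : ℕ)
    (𝒰 : Ultrafilter ℕ) (θs : ℕ → X → Fin m → ℝ)
    (hmeas : ∀ k, Measurable (θs k))
    (hsimp : ∀ k x, θs k x ∈ stdSimplex ℝ (Fin m)) :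
    ∃ θ : X → Fin m → ℝ, Measurable θ ∧ (∀ x, θ x ∈ Set.Icc (0:Fin m → ℝ) 1) ∧
      (∀ᵐ x ∂μ, θ x ∈ stdSimplex ℝ (Fin m)) ∧
      ∀ (i : Fin m) (g : X → ℝ), Integrable g μ →
        Tendsto (fun k => ∫ x, θs k x i * g x ∂μ) 𝒰 (𝓝 (∫ x, θ x i * g x ∂μ)) := by
  -- coordinates are in [0,1]
  have h01 : ∀ k x i, θs k x i ∈ Set.Icc (0:ℝ) 1 := by
    intro k x i
    obtain ⟨h0, h1⟩ := hsimp k x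
    refine ⟨h0 i, ?_⟩
    calc θs k x i ≤ ∑ j, θs k x j := Finset.single_le_sum (fun j _ => h0 j) (Finset.mem_univ i)
    _ = 1 := h1
  have hmeasi : ∀ k i, Measurable (fun x => θs k x i) :=
    fun k i => (measurable_pi_apply i).comp (hmeas k)
  have hint : ∀ k i, Integrable (fun x => θs k x i) μ := by
    intro k i
    refine (integrable_const (1:ℝ)).mono' (hmeasi k i).aestronglyMeasurable ?_
    exact Filter.Eventually.of_forall fun x => by
      rw [Real.norm_eq_abs, abs_le]
      exact ⟨by linarith [(h01 k x i).1], (h01 k x i).2⟩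
  have hintE : ∀ k i (E : Set X), IntegrableOn (fun x => θs k x i) E μ :=
    fun k i E => (hint k i).integrableOn
  -- bounds on set integrals
  have hibd : ∀ k i (E : Set X), MeasurableSet E →
      (∫ x in E, θs k x i ∂μ) ∈ Set.Icc 0 (μ E).toReal := by
    intro k i E hE
    constructor
    · exact setIntegral_nonneg hE fun x _ => (h01 k x i).1
    · calc (∫ x in E, θs k x i ∂μ) ≤ ∫ _ in E, (1:ℝ) ∂μ :=
          integral_mono (hintE k i E) (integrableOn_const (measure_lt_top μ E).ne)
            (fun x => (h01 k x i).2)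
      _ = (μ E).toReal := by simp [Measure.real]
  -- the limit set function
  set L : Fin m → Set X → ℝ := fun i E => limUnder 𝒰 (fun k => ∫ x in E, θs k x i ∂μ) with hLdef
  have hLten : ∀ i (E : Set X), MeasurableSet E →
      Tendsto (fun k => ∫ x in E, θs k x i ∂μ) 𝒰 (𝓝 (L i E)) ∧
        0 ≤ L i E ∧ L i E ≤ (μ E).toReal := by
    intro i E hE
    obtain ⟨l, hl, hlt⟩ := ulim_exists 𝒰 (fun k => hibd k i E hE)
    have : L i E = l := hlt.limUnder_eq
    rw [this]
    exact ⟨hlt, hl.1, hl.2⟩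
  have hL0 : ∀ i, ENNReal.ofReal (L i ∅) = 0 := by
    intro i
    have h0 : (fun k => ∫ x in (∅ : Set X), θs k x i ∂μ) = fun _ => (0:ℝ) := by
      funext k; simp
    rw [hLdef]; simp only [h0]
    rw [Filter.Tendsto.limUnder_eq (tendsto_const_nhds (x := (0:ℝ)))]
    simp
  have hLU : ∀ i, ∀ ⦃F : ℕ → Set X⦄, (∀ j, MeasurableSet (F j)) → Pairwise (Function.onFun Disjoint F) →
      HasSum (fun j => L i (F j)) (L i (⋃ j, F j)) := by
    intro i F hFm hFd
    set U := ⋃ j, F j with hU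
    have hUm : MeasurableSet U := MeasurableSet.iUnion hFm
    set S : ℕ → ℝ := fun J => ∑ j ∈ Finset.range J, L i (F j) with hS
    -- partial unions
    set UJ : ℕ → Set X := fun J => ⋃ j ∈ Finset.range J, F j with hUJ
    have hUJm : ∀ J, MeasurableSet (UJ J) := fun J =>
      (Finset.range J).measurableSet_biUnion (fun j _ => hFm j)
    have hUJsub : ∀ J, UJ J ⊆ U := by
      intro J x hx
      simp only [hUJ, Set.mem_iUnion] at hx
      obtain ⟨j, _, hj⟩ := hx
      exact Set.mem_iUnion.2 ⟨j, hj⟩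
    -- finite additivity for each k
    have hfinadd : ∀ k J, ∫ x in UJ J, θs k x i ∂μ = ∑ j ∈ Finset.range J, ∫ x in F j, θs k x i ∂μ := by
      intro k J
      exact integral_biUnion_finset _ (fun j _ => hFm j)
        (fun a _ b _ hab => hFd hab) (fun j _ => hintE k i (F j))
    have hsplit : ∀ k J, ∫ x in U, θs k x i ∂μ
        = ∫ x in UJ J, θs k x i ∂μ + ∫ x in U \ UJ J, θs k x i ∂μ := by
      intro k J
      rw [← setIntegral_union Set.disjoint_sdiff_right ((hUm).diff (hUJm J))
        (hintE k i _) (hintE k i _), Set.union_diff_cancel (hUJsub J)]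
    -- tendsto to partial sums
    have hSten : ∀ J, Tendsto (fun k => ∫ x in UJ J, θs k x i ∂μ) 𝒰 (𝓝 (S J)) := by
      intro J
      simp only [hfinadd, hS]
      exact tendsto_finset_sum _ (fun j _ => (hLten i (F j) (hFm j)).1)
    -- bound on the gap
    have hgap : ∀ J, L i U - S J ∈ Set.Icc 0 ((μ (U \ UJ J)).toReal) := by
      intro J
      have hdiff : Tendsto (fun k => ∫ x in U, θs k x i ∂μ - ∫ x in UJ J, θs k x i ∂μ) 𝒰
          (𝓝 (L i U - S J)) := ((hLten i U hUm).1).sub (hSten J)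
      have heq : ∀ k, ∫ x in U, θs k x i ∂μ - ∫ x in UJ J, θs k x i ∂μ
          = ∫ x in U \ UJ J, θs k x i ∂μ := by
        intro k; rw [hsplit k J]; ring
      constructor
      · refine ge_of_tendsto hdiff (Filter.Eventually.of_forall fun k => ?_)
        rw [heq k]
        exact (hibd k i _ ((hUm).diff (hUJm J))).1
      · refine le_of_tendsto hdiff (Filter.Eventually.of_forall fun k => ?_)
        rw [heq k]
        exact (hibd k i _ ((hUm).diff (hUJm J))).2
    -- the tail tends to zero
    have htail : Tendsto (fun J => (μ (U \ UJ J)).toReal) atTop (𝓝 0) := by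
      have hsub : ∀ J, U \ UJ J ⊆ ⋃ j, F (j + J) := by
        intro J x hx
        obtain ⟨hxU, hxn⟩ := hx
        obtain ⟨j, hj⟩ := Set.mem_iUnion.1 hxU
        have hjJ : ¬ j < J := by
          intro hlt
          exact hxn (by simp only [hUJ, Set.mem_iUnion]; exact ⟨j, Finset.mem_range.2 hlt, hj⟩)
        refine Set.mem_iUnion.2 ⟨j - J, ?_⟩
        rwa [Nat.sub_add_cancel (Nat.le_of_not_lt hjJ)]
      have hne : ∑' j, μ (F j) ≠ ⊤ := by
        rw [← measure_iUnion hFd hFm]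
        exact (measure_lt_top μ _).ne
      have h2 : Tendsto (fun J => ∑' j, μ (F (j + J))) atTop (𝓝 0) :=
        ENNReal.tendsto_sum_nat_add _ hne
      have h3 : Tendsto (fun J => μ (U \ UJ J)) atTop (𝓝 0) := by
        refine tendsto_of_tendsto_of_tendsto_of_le_of_le tendsto_const_nhds h2
          (fun J => zero_le) (fun J => ?_)
        exact le_trans (measure_mono (hsub J)) (measure_iUnion_le _)
      have h4 := (ENNReal.tendsto_toReal (a := 0) (by simp)).comp h3
      exact h4
    -- partial sums converge to L i U
    have hStoL : Tendsto S atTop (𝓝 (L i U)) := by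
      have h5 : Tendsto (fun J => S J - L i U) atTop (𝓝 0) := by
        refine squeeze_zero_norm (fun J => ?_) htail
        rw [Real.norm_eq_abs, abs_sub_comm, abs_of_nonneg (hgap J).1]
        exact (hgap J).2
      have h6 := h5.add (tendsto_const_nhds (x := L i U))
      simpa using h6
    exact (hasSum_iff_tendsto_nat_of_nonneg (fun j => (hLten i (F j) (hFm j)).2.1) _).2 hStoL
  -- construct the measures
  set M : Fin m → Measure X := fun i => Measure.ofMeasurable (fun E _ => ENNReal.ofReal (L i E))
    (hL0 i) (fun F hFm hFd => by
      rw [← ((hLU i hFm hFd).tsum_eq)]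
      exact ENNReal.ofReal_tsum_of_nonneg (fun j => (hLten i (F j) (hFm j)).2.1)
        (hLU i hFm hFd).summable) with hM
  have hMapp : ∀ i (E : Set X), MeasurableSet E → M i E = ENNReal.ofReal (L i E) := by
    intro i E hE
    exact Measure.ofMeasurable_apply E hE
  have hMle : ∀ i, M i ≤ μ := by
    intro i
    refine Measure.le_iff.2 fun E hE => ?_
    rw [hMapp i E hE]
    calc ENNReal.ofReal (L i E) ≤ ENNReal.ofReal ((μ E).toReal) :=
          ENNReal.ofReal_le_ofReal (hLten i E hE).2.2
    _ ≤ μ E := ENNReal.ofReal_toReal_le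
  have hMac : ∀ i, M i ≪ μ := fun i => Measure.absolutelyContinuous_of_le (hMle i)
  have hMfin : ∀ i, IsFiniteMeasure (M i) := by
    intro i
    exact ⟨lt_of_le_of_lt (Measure.le_iff'.1 (hMle i) Set.univ) (measure_lt_top μ _)⟩
  -- Radon-Nikodym derivatives
  set ρ : Fin m → X → ℝ≥0∞ := fun i => (M i).rnDeriv μ with hρ
  have hρmeas : ∀ i, Measurable (ρ i) := fun i => Measure.measurable_rnDeriv _ _
  have hρle1 : ∀ i, ρ i ≤ᵐ[μ] 1 := by
    intro i
    haveI := hMfin i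
    exact Measure.rnDeriv_le_one_of_le (hMle i)
  have hρset : ∀ i (E : Set X), MeasurableSet E → ∫⁻ x in E, ρ i x ∂μ = M i E := by
    intro i E hE
    haveI := hMfin i
    conv_rhs => rw [← Measure.withDensity_rnDeriv_eq (M i) μ (hMac i)]
    rw [withDensity_apply _ hE]
  -- the candidate limit function
  set θ : X → Fin m → ℝ := fun x i => min ((ρ i x).toReal) 1 with hθ
  have hθmeas : Measurable θ := by
    refine measurable_pi_lambda _ fun i => ?_
    exact ((hρmeas i).ennreal_toReal).min measurable_const
  have hθ01 : ∀ x i, θ x i ∈ Set.Icc (0:ℝ) 1 :=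
    fun x i => ⟨le_min ENNReal.toReal_nonneg zero_le_one, min_le_right _ _⟩
  have hθae : ∀ᵐ x ∂μ, ∀ i, θ x i = (ρ i x).toReal := by
    rw [ae_all_iff]
    intro i
    filter_upwards [hρle1 i] with x hx
    exact min_eq_left (by simpa using ENNReal.toReal_mono (by simp) hx)
  have hθint : ∀ i, Integrable (fun x => θ x i) μ := by
    intro i
    refine (integrable_const (1:ℝ)).mono'
      ((measurable_pi_apply i).comp hθmeas).aestronglyMeasurable ?_
    exact Filter.Eventually.of_forall fun x => by
      rw [Real.norm_eq_abs, abs_le]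
      exact ⟨by linarith [(hθ01 x i).1], (hθ01 x i).2⟩
  have hθL : ∀ i (E : Set X), MeasurableSet E → ∫ x in E, θ x i ∂μ = L i E := by
    intro i E hE
    have h1 : ∫ x in E, θ x i ∂μ = ∫ x in E, (ρ i x).toReal ∂μ := by
      refine integral_congr_ae ?_
      filter_upwards [ae_restrict_of_ae hθae] with x hx
      exact hx i
    have h2 : ∫ x in E, (ρ i x).toReal ∂μ = (∫⁻ x in E, ρ i x ∂μ).toReal := by
      refine integral_toReal ((hρmeas i).aemeasurable) ?_
      filter_upwards [ae_restrict_of_ae (hρle1 i)] with x hx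
      exact lt_of_le_of_lt hx (by simp)
    rw [h1, h2, hρset i E hE, hMapp i E hE,
      ENNReal.toReal_ofReal (hLten i E hE).2.1]
  -- a.e. the coordinates of θ sum to 1
  have hsum1 : ∀ᵐ x ∂μ, ∑ i, θ x i = 1 := by
    have h := ae_eq_of_forall_setIntegral_eq_of_sigmaFinite (μ := μ)
      (f := fun x => ∑ i, θ x i) (g := fun _ => (1:ℝ))
      (fun E hE hμE => (integrable_finset_sum _ (fun i _ => hθint i)).integrableOn)
      (fun E hE hμE => integrableOn_const hμE.ne)
      (fun E hE hμE => ?_)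
    · exact h
    have hconst : ∀ k, ∫ x in E, ∑ i, θs k x i ∂μ = (μ E).toReal := by
      intro k
      calc ∫ x in E, ∑ i, θs k x i ∂μ = ∫ _ in E, (1:ℝ) ∂μ :=
        integral_congr_ae (Filter.Eventually.of_forall fun x => (hsimp k x).2)
      _ = (μ E).toReal := by simp [Measure.real]
    have h7 : Tendsto (fun k => ∑ i, ∫ x in E, θs k x i ∂μ) 𝒰 (𝓝 (∑ i, L i E)) :=
      tendsto_finset_sum _ (fun i _ => (hLten i E hE).1)
    have h8 : (fun k => ∑ i, ∫ x in E, θs k x i ∂μ) = fun _ => (μ E).toReal := by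
      funext k
      rw [← integral_finset_sum _ (fun i _ => hintE k i E)]
      exact hconst k
    rw [h8] at h7
    have h9 : ∑ i, L i E = (μ E).toReal := tendsto_nhds_unique h7 tendsto_const_nhds
    calc ∫ x in E, ∑ i, θ x i ∂μ = ∑ i, ∫ x in E, θ x i ∂μ :=
          integral_finset_sum _ (fun i _ => (hθint i).integrableOn)
    _ = ∑ i, L i E := by
          refine Finset.sum_congr rfl fun i _ => hθL i E hE
    _ = (μ E).toReal := h9
    _ = ∫ _ in E, (1:ℝ) ∂μ := by simp [Measure.real]
  have hsimplex_ae : ∀ᵐ x ∂μ, θ x ∈ stdSimplex ℝ (Fin m) := by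
    filter_upwards [hsum1] with x hx
    exact ⟨fun i => (hθ01 x i).1, hx⟩
  refine ⟨θ, hθmeas, fun x => ?_, hsimplex_ae, ?_⟩
  · rw [Set.mem_Icc]
    exact ⟨fun i => (hθ01 x i).1, fun i => (hθ01 x i).2⟩
  intro i g hg
  have hbd : ∀ k, ∃ C, ∀ x, ‖θs k x i‖ ≤ C := by
    intro k
    refine ⟨1, fun x => ?_⟩
    rw [Real.norm_eq_abs, abs_le]
    exact ⟨by linarith [(h01 k x i).1], (h01 k x i).2⟩
  have hbdθ : ∃ C, ∀ x, ‖θ x i‖ ≤ C := by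
    refine ⟨1, fun x => ?_⟩
    rw [Real.norm_eq_abs, abs_le]
    exact ⟨by linarith [(hθ01 x i).1], (hθ01 x i).2⟩
  have hθimeas : Measurable (fun x => θ x i) := (measurable_pi_apply i).comp hθmeas
  -- Lipschitz estimate against L¹ elements
  have hlip : ∀ (φ : X → ℝ), Measurable φ → (∀ x, ‖φ x‖ ≤ 1) → ∀ (u w : X →₁[μ] ℝ),
      |(∫ x, φ x * u x ∂μ) - ∫ x, φ x * w x ∂μ| ≤ dist u w := by
    intro φ hφ hφb u w
    have hu : Integrable (fun x => u x) μ := L1.integrable_coeFn u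
    have hw : Integrable (fun x => w x) μ := L1.integrable_coeFn w
    rw [← integral_sub (hu.bdd_mul hφ.aestronglyMeasurable (Filter.Eventually.of_forall hφb))
      (hw.bdd_mul hφ.aestronglyMeasurable (Filter.Eventually.of_forall hφb))]
    have h1 : |∫ x, (φ x * u x - φ x * w x) ∂μ| ≤ ∫ x, |u x - w x| ∂μ := by
      refine le_trans (by simpa [Real.norm_eq_abs] using
        norm_integral_le_integral_norm (μ := μ) (fun x => φ x * u x - φ x * w x)) ?_
      refine integral_mono (((hu.bdd_mul hφ.aestronglyMeasurable (Filter.Eventually.of_forall hφb)).sub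
        (hw.bdd_mul hφ.aestronglyMeasurable (Filter.Eventually.of_forall hφb))).abs) ((hu.sub hw).abs) ?_
      intro x
      show |φ x * u x - φ x * w x| ≤ |u x - w x|
      rw [← mul_sub, abs_mul]
      refine mul_le_of_le_one_left (abs_nonneg _) ?_
      simpa [Real.norm_eq_abs] using hφb x
    have h2 : ∫ x, |u x - w x| ∂μ = dist u w := by
      rw [dist_eq_norm, L1.norm_eq_integral_norm]
      refine integral_congr_ae ?_
      filter_upwards [Lp.coeFn_sub u w] with x hx
      rw [hx]
      simp [Real.norm_eq_abs]
    rw [← h2]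
    exact h1
  refine Integrable.induction (μ := μ)
    (P := fun g => Tendsto (fun k => ∫ x, θs k x i * g x ∂μ) 𝒰 (𝓝 (∫ x, θ x i * g x ∂μ)))
    ?_ ?_ ?_ ?_ hg
  · -- indicators
    intro c s hs hμs
    have hrw : ∀ (φ : X → ℝ), ∫ x, φ x * (s.indicator fun _ => c) x ∂μ = c * ∫ x in s, φ x ∂μ := by
      intro φ
      have : (fun x => φ x * (s.indicator fun _ => c) x) = s.indicator (fun x => c * φ x) := by
        funext x
        by_cases hx : x ∈ s <;>
          simp [Set.indicator_of_mem, Set.indicator_of_notMem, hx, mul_comm]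
      rw [this, integral_indicator hs, integral_const_mul]
    simp only [hrw]
    rw [hθL i s hs]
    exact ((hLten i s hs).1).const_mul c
  · -- additivity
    intro g1 g2 hdisj hg1 hg2 hP1 hP2
    have e1 : ∀ k, ∫ x, θs k x i * (g1 + g2) x ∂μ
        = (∫ x, θs k x i * g1 x ∂μ) + ∫ x, θs k x i * g2 x ∂μ := by
      intro k
      rw [← integral_add (hg1.bdd_mul (hmeasi k i).aestronglyMeasurable (Filter.Eventually.of_forall (hbd k).choose_spec))
        (hg2.bdd_mul (hmeasi k i).aestronglyMeasurable (Filter.Eventually.of_forall (hbd k).choose_spec))]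
      exact integral_congr_ae (Filter.Eventually.of_forall fun x => by simp [mul_add])
    have e2 : ∫ x, θ x i * (g1 + g2) x ∂μ
        = (∫ x, θ x i * g1 x ∂μ) + ∫ x, θ x i * g2 x ∂μ := by
      rw [← integral_add (hg1.bdd_mul hθimeas.aestronglyMeasurable (Filter.Eventually.of_forall hbdθ.choose_spec))
        (hg2.bdd_mul hθimeas.aestronglyMeasurable (Filter.Eventually.of_forall hbdθ.choose_spec))]
      exact integral_congr_ae (Filter.Eventually.of_forall fun x => by simp [mul_add])
    simp only [e1, e2]
    exact hP1.add hP2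
  · -- closedness in L¹
    refine isClosed_of_closure_subset ?_
    intro u hu
    simp only [Set.mem_setOf_eq]
    rw [Metric.tendsto_nhds]
    intro ε hε
    rcases Metric.mem_closure_iff.1 hu (ε/3) (by linarith) with ⟨w, hwS, hdw⟩
    have h9 := Metric.tendsto_nhds.1 hwS (ε/3) (by linarith)
    have hbd1 : ∀ x, ‖θ x i‖ ≤ 1 := by
      intro x
      rw [Real.norm_eq_abs, abs_le]
      exact ⟨by linarith [(hθ01 x i).1], (hθ01 x i).2⟩
    have hbdk : ∀ k x, ‖θs k x i‖ ≤ 1 := by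
      intro k x
      rw [Real.norm_eq_abs, abs_le]
      exact ⟨by linarith [(h01 k x i).1], (h01 k x i).2⟩
    filter_upwards [h9] with k hk
    have t1 : |(∫ x, θs k x i * u x ∂μ) - ∫ x, θs k x i * w x ∂μ| ≤ dist u w :=
      hlip _ (hmeasi k i) (hbdk k) u w
    have t2 : |(∫ x, θ x i * w x ∂μ) - ∫ x, θ x i * u x ∂μ| ≤ dist w u :=
      hlip _ hθimeas hbd1 w u
    have t3 := hk
    rw [Real.dist_eq] at t3 ⊢
    have htri : |(∫ x, θs k x i * u x ∂μ) - ∫ x, θ x i * u x ∂μ|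
        ≤ |(∫ x, θs k x i * u x ∂μ) - ∫ x, θs k x i * w x ∂μ|
          + |(∫ x, θs k x i * w x ∂μ) - ∫ x, θ x i * w x ∂μ|
          + |(∫ x, θ x i * w x ∂μ) - ∫ x, θ x i * u x ∂μ| := by
      calc |(∫ x, θs k x i * u x ∂μ) - ∫ x, θ x i * u x ∂μ|
          ≤ |(∫ x, θs k x i * u x ∂μ) - ∫ x, θ x i * w x ∂μ|
            + |(∫ x, θ x i * w x ∂μ) - ∫ x, θ x i * u x ∂μ| := abs_sub_le _ _ _
      _ ≤ (|(∫ x, θs k x i * u x ∂μ) - ∫ x, θs k x i * w x ∂μ|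
            + |(∫ x, θs k x i * w x ∂μ) - ∫ x, θ x i * w x ∂μ|)
            + |(∫ x, θ x i * w x ∂μ) - ∫ x, θ x i * u x ∂μ| := by
          gcongr
          exact abs_sub_le _ _ _

    have hdwu : dist w u = dist u w := dist_comm w u
    linarith [htri, t1, t2, t3, hdw]
  · -- a.e. congruence
    intro g1 g2 hg12 hg1int hP
    have e1 : (fun k => ∫ x, θs k x i * g2 x ∂μ) = fun k => ∫ x, θs k x i * g1 x ∂μ := by
      funext k
      exact integral_congr_ae (hg12.mono fun x hx => by simp [hx])
    have e2 : ∫ x, θ x i * g2 x ∂μ = ∫ x, θ x i * g1 x ∂μ :=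
      integral_congr_ae (hg12.mono fun x hx => by simp [hx])
    show Tendsto (fun k => ∫ x, θs k x i * g2 x ∂μ) 𝒰 (𝓝 (∫ x, θ x i * g2 x ∂μ))
    rw [e1, e2]
    exact hP

/-- Existence of a minimizer of `θ ↦ ∫_K θ(x)·v(x) dx` over the constraint set
`𝒜_α = {θ : K → Δ_m measurable | ∑ᵢ ∫_K θᵢ fᵢ = α}`, assumed nonempty. -/
theorem stmt3 (d n m : ℕ) (K : Set (Fin d → ℝ)) (hK : IsCompact K)
    (f : Fin m → (Fin d → ℝ) → Fin n → ℝ) (hf : ∀ i, IntegrableOn (f i) K)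
    (α : Fin n → ℝ)
    (v : (Fin d → ℝ) → Fin m → ℝ) (hv : ContinuousOn v K)
    (A : Set ((Fin d → ℝ) → Fin m → ℝ))
    (hA : A = {θ | Measurable θ ∧ (∀ x ∈ K, θ x ∈ stdSimplex ℝ (Fin m)) ∧
      (∫ x in K, ∑ i, θ x i • f i x) = α})
    (hne : A.Nonempty) :
    ∃ θ ∈ A, ∀ θ' ∈ A,
      (∫ x in K, ∑ i, θ x i * v x i) ≤ ∫ x in K, ∑ i, θ' x i * v x i := by
  classical
  rcases Nat.eq_zero_or_pos m with hm0 | hm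
  · subst hm0
    obtain ⟨θ₀, hθ₀⟩ := hne
    refine ⟨θ₀, hθ₀, fun θ' hθ' => ?_⟩
    simp
  have hKm : MeasurableSet K := hK.isClosed.measurableSet
  set μ : Measure (Fin d → ℝ) := volume.restrict K with hμdef
  haveI : IsFiniteMeasure μ := ⟨by
    rw [hμdef, Measure.restrict_apply_univ]; exact hK.measure_lt_top⟩
  -- a vertex of the simplex
  set e : Fin m → ℝ := fun j => if j = (⟨0, hm⟩ : Fin m) then 1 else 0 with hedef
  have heS : e ∈ stdSimplex ℝ (Fin m) := by
    refine ⟨fun j => ?_, ?_⟩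
    · by_cases h : j = (⟨0, hm⟩ : Fin m) <;> simp [hedef, h]
    · simp [hedef]
  -- integrability of the data
  have hvK : IntegrableOn v K volume := hv.integrableOn_compact hK
  have hvi : ∀ i, Integrable (fun x => v x i) μ := fun i =>
    (ContinuousLinearMap.proj (R := ℝ) (φ := fun _ : Fin m => ℝ) i).integrable_comp hvK
  have hfij : ∀ i j, Integrable (fun x => f i x j) μ := fun i j =>
    (ContinuousLinearMap.proj (R := ℝ) (φ := fun _ : Fin n => ℝ) j).integrable_comp (hf i)
  -- bounds for simplex-valued functions
  have hbound : ∀ (θ : (Fin d → ℝ) → Fin m → ℝ), (∀ x, θ x ∈ stdSimplex ℝ (Fin m)) →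
      ∀ x i, 0 ≤ θ x i ∧ θ x i ≤ 1 := by
    intro θ hθ x i
    refine ⟨(hθ x).1 i, ?_⟩
    calc θ x i ≤ ∑ j, θ x j := Finset.single_le_sum (fun j _ => (hθ x).1 j) (Finset.mem_univ i)
    _ = 1 := (hθ x).2
  have hnorm1 : ∀ (θ : (Fin d → ℝ) → Fin m → ℝ), (∀ x, θ x ∈ stdSimplex ℝ (Fin m)) →
      ∀ i x, ‖θ x i‖ ≤ 1 := by
    intro θ hθ i x
    rw [Real.norm_eq_abs, abs_le]
    exact ⟨by linarith [(hbound θ hθ x i).1], (hbound θ hθ x i).2⟩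
  have hmulvint : ∀ (θ : (Fin d → ℝ) → Fin m → ℝ), Measurable θ →
      (∀ x, θ x ∈ stdSimplex ℝ (Fin m)) → ∀ i,
      Integrable (fun x => θ x i * v x i) μ := by
    intro θ hθm hθS i
    exact (hvi i).bdd_mul ((measurable_pi_apply i).comp hθm).aestronglyMeasurable
      (Filter.Eventually.of_forall (hnorm1 θ hθS i))
  have hmulfint : ∀ (θ : (Fin d → ℝ) → Fin m → ℝ), Measurable θ →
      (∀ x, θ x ∈ stdSimplex ℝ (Fin m)) → ∀ i j,
      Integrable (fun x => θ x i * f i x j) μ := by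
    intro θ hθm hθS i j
    exact (hfij i j).bdd_mul ((measurable_pi_apply i).comp hθm).aestronglyMeasurable
      (Filter.Eventually.of_forall (hnorm1 θ hθS i))
  have hFint : ∀ (θ : (Fin d → ℝ) → Fin m → ℝ), Measurable θ →
      (∀ x, θ x ∈ stdSimplex ℝ (Fin m)) →
      Integrable (fun x => ∑ i, θ x i • f i x) μ := by
    intro θ hθm hθS
    refine integrable_finset_sum _ (fun i _ => ?_)
    refine Integrable.mono' (hf i).norm
      (((measurable_pi_apply i).comp hθm).aestronglyMeasurable.smul
        (hf i).aestronglyMeasurable) ?_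
    refine Filter.Eventually.of_forall fun x => ?_
    rw [norm_smul]
    exact mul_le_of_le_one_left (norm_nonneg _) (hnorm1 θ hθS i x)
  -- constraint reformulation
  have hconstr : ∀ (θ : (Fin d → ℝ) → Fin m → ℝ), Measurable θ →
      (∀ x, θ x ∈ stdSimplex ℝ (Fin m)) →
      ((∫ x, ∑ i, θ x i • f i x ∂μ) = α ↔
        ∀ j, ∑ i, ∫ x, θ x i * f i x j ∂μ = α j) := by
    intro θ hθm hθS
    have hint := hFint θ hθm hθS
    have hcomp : ∀ j, (∫ x, ∑ i, θ x i • f i x ∂μ) j = ∑ i, ∫ x, θ x i * f i x j ∂μ := by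
      intro j
      have h1 := (ContinuousLinearMap.proj (R := ℝ) (φ := fun _ : Fin n => ℝ) j).integral_comp_comm hint
      calc (∫ x, ∑ i, θ x i • f i x ∂μ) j
          = ∫ x, (∑ i, θ x i • f i x) j ∂μ := h1.symm
      _ = ∑ i, ∫ x, θ x i * f i x j ∂μ := by
          rw [← integral_finset_sum _ (fun i _ => hmulfint θ hθm hθS i j)]
          refine integral_congr_ae (Filter.Eventually.of_forall fun x => ?_)
          simp [Finset.sum_apply]
    constructor
    · intro h j
      rw [← hcomp j, h]
    · intro h
      funext j
      rw [hcomp j, h j]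
  -- the "hat" operation: replace θ outside K by the vertex e
  have hhat : ∀ θ' ∈ A, (K.piecewise θ' (fun _ => e)) ∈ A ∧
      Measurable (K.piecewise θ' (fun _ => e)) ∧
      (∀ x, (K.piecewise θ' (fun _ => e)) x ∈ stdSimplex ℝ (Fin m)) ∧
      (∫ x, ∑ i, (K.piecewise θ' (fun _ => e)) x i * v x i ∂μ)
        = ∫ x, ∑ i, θ' x i * v x i ∂μ := by
    intro θ' hθ'
    rw [hA] at hθ'
    obtain ⟨hm', hS', hc'⟩ := hθ'
    have hmeas' : Measurable (K.piecewise θ' (fun _ => e)) :=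
      Measurable.piecewise hKm hm' measurable_const
    have hS'' : ∀ x, (K.piecewise θ' (fun _ => e)) x ∈ stdSimplex ℝ (Fin m) := by
      intro x
      by_cases hx : x ∈ K
      · rw [Set.piecewise_eq_of_mem _ _ _ hx]; exact hS' x hx
      · rw [Set.piecewise_eq_of_notMem _ _ _ hx]; exact heS
    have hcongr1 : (∫ x, ∑ i, (K.piecewise θ' (fun _ => e)) x i • f i x ∂μ)
        = ∫ x, ∑ i, θ' x i • f i x ∂μ := by
      refine integral_congr_ae ?_
      filter_upwards [ae_restrict_mem hKm] with x hx
      rw [Set.piecewise_eq_of_mem _ _ _ hx]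
    have hcongr2 : (∫ x, ∑ i, (K.piecewise θ' (fun _ => e)) x i * v x i ∂μ)
        = ∫ x, ∑ i, θ' x i * v x i ∂μ := by
      refine integral_congr_ae ?_
      filter_upwards [ae_restrict_mem hKm] with x hx
      rw [Set.piecewise_eq_of_mem _ _ _ hx]
    refine ⟨?_, hmeas', hS'', hcongr2⟩
    rw [hA]
    exact ⟨hmeas', fun x _ => hS'' x, by rw [hcongr1]; exact hc'⟩
  -- lower bound for the objective
  obtain ⟨C, hC⟩ := hK.exists_bound_of_continuousOn hv
  set C' : ℝ := max C 0 with hC'def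
  have hvbd : ∀ x ∈ K, ∀ i, -C' ≤ v x i := by
    intro x hx i
    have h1 : |v x i| ≤ C' := by
      calc |v x i| = ‖v x i‖ := (Real.norm_eq_abs _).symm
      _ ≤ ‖v x‖ := norm_le_pi_norm (v x) i
      _ ≤ C := hC x hx
      _ ≤ C' := le_max_left _ _
    linarith [(abs_le.1 h1).1]
  have hlb : ∀ (θ' : (Fin d → ℝ) → Fin m → ℝ), Measurable θ' →
      (∀ x, θ' x ∈ stdSimplex ℝ (Fin m)) →
      -(C' * (μ Set.univ).toReal) ≤ ∫ x, ∑ i, θ' x i * v x i ∂μ := by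
    intro θ' hm' hS'
    have hint : Integrable (fun x => ∑ i, θ' x i * v x i) μ :=
      integrable_finset_sum _ (fun i _ => hmulvint θ' hm' hS' i)
    have hmono : (∫ _, (-C') ∂μ) ≤ ∫ x, ∑ i, θ' x i * v x i ∂μ := by
      refine integral_mono_ae (integrable_const _) hint ?_
      filter_upwards [ae_restrict_mem hKm] with x hx
      show -C' ≤ ∑ i, θ' x i * v x i
      calc -C' = ∑ i, θ' x i * (-C') := by
            rw [← Finset.sum_mul, (hS' x).2, one_mul]
      _ ≤ ∑ i, θ' x i * v x i :=
            Finset.sum_le_sum fun i _ =>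
              mul_le_mul_of_nonneg_left (hvbd x hx i) ((hS' x).1 i)
    calc -(C' * (μ Set.univ).toReal) = ∫ _, (-C') ∂μ := by
          rw [integral_const, smul_eq_mul, Measure.real]; ring
    _ ≤ _ := hmono
  -- the infimum and a minimizing sequence
  set Jf : ((Fin d → ℝ) → Fin m → ℝ) → ℝ := fun θ' => ∫ x, ∑ i, θ' x i * v x i ∂μ with hJf
  set B : Set ℝ := Jf '' A with hBdef
  have hBne : B.Nonempty := hne.image _
  have hBbdd : BddBelow B := by
    refine ⟨-(C' * (μ Set.univ).toReal), ?_⟩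
    rintro b ⟨θ', hθ', rfl⟩
    obtain ⟨hA', hm', hS', hJeq⟩ := hhat θ' hθ'
    show -(C' * (μ Set.univ).toReal) ≤ ∫ x, ∑ i, θ' x i * v x i ∂μ
    rw [← hJeq]
    exact hlb _ hm' hS'
  obtain ⟨u, -, hu_tend, hu_mem⟩ := exists_seq_tendsto_sInf hBne hBbdd
  have hex : ∀ k, ∃ θ', θ' ∈ A ∧ Jf θ' = u k := by
    intro k
    rcases hu_mem k with ⟨θ', h1, h2⟩
    exact ⟨θ', h1, h2⟩
  choose θk hθkA hθkJ using hex
  set θs : ℕ → (Fin d → ℝ) → Fin m → ℝ := fun k => K.piecewise (θk k) (fun _ => e) with hθsdef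
  have hθsA : ∀ k, θs k ∈ A := fun k => (hhat _ (hθkA k)).1
  have hθsm : ∀ k, Measurable (θs k) := fun k => (hhat _ (hθkA k)).2.1
  have hθsS : ∀ k x, θs k x ∈ stdSimplex ℝ (Fin m) := fun k x => (hhat _ (hθkA k)).2.2.1 x
  have hθsJ : ∀ k, (∫ x, ∑ i, θs k x i * v x i ∂μ) = u k := by
    intro k
    rw [(hhat _ (hθkA k)).2.2.2]
    exact hθkJ k
  set 𝒰 : Ultrafilter ℕ := Ultrafilter.of atTop with h𝒰def
  have h𝒰le : (𝒰 : Filter ℕ) ≤ atTop := Ultrafilter.of_le _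
  obtain ⟨θb, hbm, hb01, hbS, hbconv⟩ := key μ m 𝒰 θs hθsm hθsS
  -- fix a version of the limit that is everywhere in the simplex
  set θstar : (Fin d → ℝ) → Fin m → ℝ :=
    fun x => if θb x ∈ stdSimplex ℝ (Fin m) then θb x else e with hθstardef
  have hsm : Measurable θstar :=
    Measurable.ite (hbm (isClosed_stdSimplex ℝ (Fin m)).measurableSet) hbm measurable_const
  have hsS : ∀ x, θstar x ∈ stdSimplex ℝ (Fin m) := by
    intro x
    rw [hθstardef]
    by_cases h : θb x ∈ stdSimplex ℝ (Fin m) <;> simp [h, heS]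
  have hsae : θstar =ᵐ[μ] θb := by
    filter_upwards [hbS] with x hx
    rw [hθstardef]
    simp [hx]
  have hsconv : ∀ (i : Fin m) (g : (Fin d → ℝ) → ℝ), Integrable g μ →
      Tendsto (fun k => ∫ x, θs k x i * g x ∂μ) 𝒰 (𝓝 (∫ x, θstar x i * g x ∂μ)) := by
    intro i g hg
    have heq : ∫ x, θstar x i * g x ∂μ = ∫ x, θb x i * g x ∂μ := by
      refine integral_congr_ae ?_
      filter_upwards [hsae] with x hx
      rw [hx]
    rw [heq]
    exact hbconv i g hg
  -- the constraint passes to the limit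
  have hconstrk : ∀ k, (∫ x, ∑ i, θs k x i • f i x ∂μ) = α := by
    intro k
    have h := hθsA k
    rw [hA] at h
    exact h.2.2
  have hcstar : ∀ j, ∑ i, ∫ x, θstar x i * f i x j ∂μ = α j := by
    intro j
    have ht : Tendsto (fun k => ∑ i, ∫ x, θs k x i * f i x j ∂μ) 𝒰
        (𝓝 (∑ i, ∫ x, θstar x i * f i x j ∂μ)) :=
      tendsto_finset_sum _ (fun i _ => hsconv i _ (hfij i j))
    have hcc : (fun k => ∑ i, ∫ x, θs k x i * f i x j ∂μ) = fun _ => α j :=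
      funext fun k => (hconstr (θs k) (hθsm k) (hθsS k)).1 (hconstrk k) j
    rw [hcc] at ht
    exact tendsto_nhds_unique ht tendsto_const_nhds
  have hstarA : θstar ∈ A := by
    rw [hA]
    exact ⟨hsm, fun x _ => hsS x, (hconstr θstar hsm hsS).2 hcstar⟩
  -- the objective passes to the limit
  have hJstar : (∫ x, ∑ i, θstar x i * v x i ∂μ) = sInf B := by
    have ht1 : Tendsto (fun k => ∫ x, ∑ i, θs k x i * v x i ∂μ) 𝒰
        (𝓝 (∫ x, ∑ i, θstar x i * v x i ∂μ)) := by
      have h2 : (∫ x, ∑ i, θstar x i * v x i ∂μ) = ∑ i, ∫ x, θstar x i * v x i ∂μ :=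
        integral_finset_sum _ (fun i _ => hmulvint θstar hsm hsS i)
      have h3 : ∀ k, (∫ x, ∑ i, θs k x i * v x i ∂μ) = ∑ i, ∫ x, θs k x i * v x i ∂μ :=
        fun k => integral_finset_sum _ (fun i _ => hmulvint (θs k) (hθsm k) (hθsS k) i)
      rw [h2]
      simp only [h3]
      exact tendsto_finset_sum _ (fun i _ => hsconv i _ (hvi i))
    have ht2 : Tendsto (fun k => ∫ x, ∑ i, θs k x i * v x i ∂μ) 𝒰 (𝓝 (sInf B)) := by
      have hueq : (fun k => ∫ x, ∑ i, θs k x i * v x i ∂μ) = u := funext hθsJ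
      rw [hueq]
      exact hu_tend.mono_left h𝒰le
    exact tendsto_nhds_unique ht1 ht2
  refine ⟨θstar, hstarA, fun θ' hθ'A => ?_⟩
  have hmem : (∫ x, ∑ i, θ' x i * v x i ∂μ) ∈ B := ⟨θ', hθ'A, rfl⟩
  have h2 := csInf_le hBbdd hmem
  show (∫ x, ∑ i, θstar x i * v x i ∂μ) ≤ ∫ x, ∑ i, θ' x i * v x i ∂μ
  rw [hJstar]
  exact h2
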